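/- arXiv:2511.09351 — 4 statements merged into one kernel-verified Lean document; each statement's English description precedes it below -/
import Mathlib

section
/- Let E be a block cipher with key length κ and block length n, with decryption D. Let α ∈ {0,1}^κ be a constant, σ : {0,1}^n → {0,1}^n a function, and R : {0,1}^n → {0,1}^n a map that is linear with respect to XOR, i.e., R(x ⊕ y) = R(x) ⊕ R(y) for all x, y. Let k ∈ {0,1}^κ and k₁, k₂ ∈ {0,1}^n, and define the key-alternating reflection cipher KARC_{k,k₁,k₂}(m) = D_{k⊕α}(R(E_k(m ⊕ k₁) ⊕ k₂) ⊕ σ(k₂)) ⊕ σ(k₁). Then for every plaintext m ∈ {0,1}^n with ciphertext c = KARC_{k,k₁,k₂}(m), setting a = E_k(m ⊕ k₁) and b = E_{k⊕α}(c ⊕ σ(k₁)), one has b ⊕ R(a) = R(k₂) ⊕ σ(k₂); in particular b ⊕ R(a) is a fixed value independent of m. -/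
/-- For the two-round key-alternating reflection cipher
`KARC_{k,k₁,k₂}(m) = D_{k⊕α}(R(E_k(m ⊕ k₁) ⊕ k₂) ⊕ σ(k₂)) ⊕ σ(k₁)` with `R` XOR-linear,
setting `a = E_k(m ⊕ k₁)` and `b = E_{k⊕α}(c ⊕ σ(k₁))` for `c = KARC(m)`, one has
`b ⊕ R(a) = R(k₂) ⊕ σ(k₂)`, a fixed value independent of `m`. -/
theorem KARC_sieve_value_fixed
    (κ n : ℕ)
    (E D : BitVec κ → BitVec n → BitVec n)
    (hDE : ∀ k m, D k (E k m) = m) (hED : ∀ k c, E k (D k c) = c)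
    (α : BitVec κ) (σ : BitVec n → BitVec n) (R : BitVec n → BitVec n)
    (hR : ∀ x y : BitVec n, R (x ^^^ y) = R x ^^^ R y)
    (k : BitVec κ) (k₁ k₂ : BitVec n) :
    let KARC : BitVec n → BitVec n :=
      fun m => D (k ^^^ α) (R (E k (m ^^^ k₁) ^^^ k₂) ^^^ σ k₂) ^^^ σ k₁
    ∀ m : BitVec n,
      E (k ^^^ α) (KARC m ^^^ σ k₁) ^^^ R (E k (m ^^^ k₁)) = R k₂ ^^^ σ k₂ := by
  intro KARC m
  simp only [KARC, BitVec.xor_assoc, BitVec.xor_self, BitVec.xor_zero, hED, hR]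
  rw [BitVec.xor_comm (R (E k (m ^^^ k₁)))]
  rw [BitVec.xor_assoc, BitVec.xor_assoc, BitVec.xor_self, BitVec.xor_zero]
end

section
/- Let E¹, E² be block ciphers with key length κ and block length n, with decryptions D¹, D². Let {L_z : z ∈ {0,1}^n} be a family of permutations of {0,1}^n, let k ∈ {0,1}^κ and k₁, k₂ ∈ {0,1}^n, and define Enc(m) = E²_k(L_{k₂}(E¹_k(m ⊕ k₁))) ⊕ k₁. Assume L_{k₂} is an involution, i.e., L_{k₂}(L_{k₂}(x)) = x for all x. Let m, c* ∈ {0,1}^n, let c = Enc(m), and let m* be the unique plaintext with Enc(m*) = c*. If E¹_k(m ⊕ k₁) = D²_k(c* ⊕ k₁), then D²_k(c ⊕ k₁) = E¹_k(m* ⊕ k₁); that is, (m, m*) is a mirror slid pair. -/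
/-- For `Enc(m) = E²_k(L_{k₂}(E¹_k(m ⊕ k₁))) ⊕ k₁` with involutive middle
layer `L_{k₂}`, if `E¹_k(m ⊕ k₁) = D²_k(c* ⊕ k₁)` where `c = Enc(m)` and `Enc(m*) = c*`,
then `D²_k(c ⊕ k₁) = E¹_k(m* ⊕ k₁)`; that is, `(m, m*)` is a mirror slid pair. -/
theorem mirror_slid_pair_involution
    (κ n : ℕ)
    (E₁ D₁ E₂ D₂ : BitVec κ → BitVec n → BitVec n)
    (hDE₁ : ∀ k m, D₁ k (E₁ k m) = m) (hED₁ : ∀ k c, E₁ k (D₁ k c) = c)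
    (hDE₂ : ∀ k m, D₂ k (E₂ k m) = m) (hED₂ : ∀ k c, E₂ k (D₂ k c) = c)
    (L : BitVec n → BitVec n → BitVec n)
    (hL : ∀ z : BitVec n, Function.Bijective (L z))
    (k : BitVec κ) (k₁ k₂ : BitVec n)
    (hinv : ∀ x : BitVec n, L k₂ (L k₂ x) = x) :
    let Enc : BitVec n → BitVec n :=
      fun m => E₂ k (L k₂ (E₁ k (m ^^^ k₁))) ^^^ k₁
    ∀ m cstar mstar : BitVec n,
      Enc mstar = cstar →
      E₁ k (m ^^^ k₁) = D₂ k (cstar ^^^ k₁) →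
      D₂ k (Enc m ^^^ k₁) = E₁ k (mstar ^^^ k₁) := by
  intro Enc m cstar mstar hstar hpair
  subst hstar
  simp only [Enc, BitVec.xor_assoc, BitVec.xor_self, BitVec.xor_zero, hDE₂] at hpair ⊢
  rw [hpair, hinv]
end

section
/- Let E¹, E² be block ciphers with key length κ and block length n, with decryptions D¹, D². Let {L_z : z ∈ {0,1}^n} be a family of permutations of {0,1}^n, let k ∈ {0,1}^κ and k₁, k₂ ∈ {0,1}^n, and define Enc(m) = E²_k(L_{k₂}(E¹_k(m ⊕ k₁))) ⊕ k₁. Assume L_{k₂} is an involution, i.e., L_{k₂}(L_{k₂}(x)) = x for all x. For each i ∈ {0,1}^n, define a_i = D²_k(Enc(D¹_k(i) ⊕ k₁) ⊕ k₁) and b_i = E¹_k(Enc^{-1}(E²_k(i) ⊕ k₁) ⊕ k₁). Then a_i = b_i = L_{k₂}(i) for every i ∈ {0,1}^n. -/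
/-- For `Enc(m) = E²_k(L_{k₂}(E¹_k(m ⊕ k₁))) ⊕ k₁` with involutive middle
layer `L_{k₂}`, the Q2-model sieve values
`a_i = D²_k(Enc(D¹_k(i) ⊕ k₁) ⊕ k₁)` and `b_i = E¹_k(Enc⁻¹(E²_k(i) ⊕ k₁) ⊕ k₁)` satisfy
`a_i = b_i = L_{k₂}(i)` for every `i`. -/
theorem Q2_sieve_values_involution
    (κ n : ℕ)
    (E₁ D₁ E₂ D₂ : BitVec κ → BitVec n → BitVec n)
    (hDE₁ : ∀ k m, D₁ k (E₁ k m) = m) (hED₁ : ∀ k c, E₁ k (D₁ k c) = c)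
    (hDE₂ : ∀ k m, D₂ k (E₂ k m) = m) (hED₂ : ∀ k c, E₂ k (D₂ k c) = c)
    (L : BitVec n → BitVec n → BitVec n)
    (hL : ∀ z : BitVec n, Function.Bijective (L z))
    (k : BitVec κ) (k₁ k₂ : BitVec n)
    (hinv : ∀ x : BitVec n, L k₂ (L k₂ x) = x)
    (Enc EncInv : BitVec n → BitVec n)
    (hEnc : ∀ m : BitVec n, Enc m = E₂ k (L k₂ (E₁ k (m ^^^ k₁))) ^^^ k₁)
    (hInvEnc : ∀ m : BitVec n, EncInv (Enc m) = m)
    (hEncInv : ∀ c : BitVec n, Enc (EncInv c) = c) :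
    ∀ i : BitVec n,
      D₂ k (Enc (D₁ k i ^^^ k₁) ^^^ k₁) = L k₂ i ∧
      E₁ k (EncInv (E₂ k i ^^^ k₁) ^^^ k₁) = L k₂ i := by
  intro i
  constructor
  · rw [hEnc]
    simp [BitVec.xor_assoc, hED₁, hDE₂]
  · have h : Enc (D₁ k (L k₂ i) ^^^ k₁) = E₂ k i ^^^ k₁ := by
      rw [hEnc]
      simp [BitVec.xor_assoc, hED₁, hinv]
    rw [← h, hInvEnc]
    simp [BitVec.xor_assoc, hED₁]
end

section
/- Let E¹, E² be block ciphers with key length κ and block length n, with decryptions D¹, D². Let {L_z : z ∈ {0,1}^n} be a family of permutations of {0,1}^n, let P : {0,1}^n → {0,1}^n be a fixed (key-independent) map, let k ∈ {0,1}^κ and k₁, k₂ ∈ {0,1}^n, and define Enc(m) = E²_k(L_{k₂}(E¹_k(m ⊕ k₁))) ⊕ k₁. Assume L_{k₂} ∘ P ∘ L_{k₂} = Id, i.e., L_{k₂}(P(L_{k₂}(x))) = x for all x. For each i ∈ {0,1}^n, define a_i = D²_k(Enc(D¹_k(i) ⊕ k₁) ⊕ k₁) and b_i = E¹_k(Enc^{-1}(E²_k(i)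 ⊕ k₁) ⊕ k₁). Then P(a_i) = b_i for every i ∈ {0,1}^n. -/
/-- For `Enc(m) = E²_k(L_{k₂}(E¹_k(m ⊕ k₁))) ⊕ k₁` with middle layer
satisfying `L_{k₂} ∘ P ∘ L_{k₂} = Id` for a key-independent map `P`, the Q2-model sieve
values `a_i = D²_k(Enc(D¹_k(i) ⊕ k₁) ⊕ k₁)` and `b_i = E¹_k(Enc⁻¹(E²_k(i) ⊕ k₁) ⊕ k₁)`
satisfy `P(a_i) = b_i` for every `i`. -/
theorem Q2_sieve_values_LPL
    (κ n : ℕ)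
    (E₁ D₁ E₂ D₂ : BitVec κ → BitVec n → BitVec n)
    (hDE₁ : ∀ k m, D₁ k (E₁ k m) = m) (hED₁ : ∀ k c, E₁ k (D₁ k c) = c)
    (hDE₂ : ∀ k m, D₂ k (E₂ k m) = m) (hED₂ : ∀ k c, E₂ k (D₂ k c) = c)
    (L : BitVec n → BitVec n → BitVec n)
    (hL : ∀ z : BitVec n, Function.Bijective (L z))
    (P : BitVec n → BitVec n)
    (k : BitVec κ) (k₁ k₂ : BitVec n)
    (hLPL : ∀ x : BitVec n, L k₂ (P (L k₂ x)) = x)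
    (Enc EncInv : BitVec n → BitVec n)
    (hEnc : ∀ m : BitVec n, Enc m = E₂ k (L k₂ (E₁ k (m ^^^ k₁))) ^^^ k₁)
    (hInvEnc : ∀ m : BitVec n, EncInv (Enc m) = m)
    (hEncInv : ∀ c : BitVec n, Enc (EncInv c) = c) :
    ∀ i : BitVec n,
      P (D₂ k (Enc (D₁ k i ^^^ k₁) ^^^ k₁)) =
        E₁ k (EncInv (E₂ k i ^^^ k₁) ^^^ k₁) := by
  intro i
  have ha : D₂ k (Enc (D₁ k i ^^^ k₁) ^^^ k₁) = L k₂ i := by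
    rw [hEnc]
    simp [BitVec.xor_assoc, hED₁, hDE₂]
  rw [ha]
  set m := EncInv (E₂ k i ^^^ k₁) with hm
  have hEm : Enc m = E₂ k i ^^^ k₁ := hEncInv _
  rw [hEnc] at hEm
  have h2 : E₂ k (L k₂ (E₁ k (m ^^^ k₁))) = E₂ k i := by
    have := congrArg (· ^^^ k₁) hEm
    simpa [BitVec.xor_assoc] using this
  have h3 : L k₂ (E₁ k (m ^^^ k₁)) = i := by
    have := congrArg (D₂ k) h2
    simpa [hDE₂] using this
  apply (hL k₂).injective
  rw [← h3, hLPL, h3]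
end
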